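/- For a topological space X, the standard contact algebra (RC(X), ρ_X), where F ρ_X G iff F ∩ G ≠ ∅, is connected (i.e., satisfies: F ≠ ∅ and F ≠ X imply F ρ_X F*) if and only if the space X is connected. -/
import Mathlib

open Set

/-- A set is regular closed if it equals the closure of its interior. -/
def IsRegularClosed {X : Type*} [TopologicalSpace X] (F : Set X) : Prop :=
  closure (interior F) = F

lemma IsClopen.isRegularClosed {X : Type*} [TopologicalSpace X] {F : Set X}
    (h : IsClopen F) : IsRegularClosed F := by
  unfold IsRegularClosed
  rw [h.isOpen.interior_eq, h.isClosed.closure_eq]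

/-- The standard contact algebra (RC(X), ρ_X) is connected iff the space X is
connected (i.e. cannot be split into two nonempty disjoint open sets). -/
theorem rc_connected_iff (X : Type*) [TopologicalSpace X] :
    (∀ F : Set X, IsRegularClosed F → F ≠ ∅ → F ≠ univ →
      (F ∩ closure Fᶜ).Nonempty) ↔ PreconnectedSpace X := by
  constructor
  · intro h
    rw [preconnectedSpace_iff_univ]
    rintro u v hu hv hcov ⟨x, _, hxu⟩ ⟨y, _, hyv⟩
    by_contra hne
    rw [Set.not_nonempty_iff_eq_empty] at hne
    have hdisj : u ∩ v = ∅ := by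
      have := hne
      rw [Set.univ_inter] at this
      exact this
    have hcompl : uᶜ = v := by
      apply Set.eq_of_subset_of_subset
      · intro z hz
        rcases hcov (mem_univ z) with h1 | h1
        · exact absurd h1 hz
        · exact h1
      · intro z hz hzu
        exact absurd (Set.mem_inter hzu hz) (by rw [hdisj]; exact notMem_empty z)
    have hclopen : IsClopen u := ⟨by rw [← isOpen_compl_iff, hcompl]; exact hv, hu⟩
    have hne1 : u ≠ ∅ := fun he => (he ▸ hxu : x ∈ (∅ : Set X))
    have hne2 : u ≠ univ := by
      intro he
      have : y ∈ uᶜ := hcompl ▸ hyv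
      rw [he] at this
      exact this (mem_univ y)
    obtain ⟨z, hz1, hz2⟩ := h u hclopen.isRegularClosed hne1 hne2
    have hvclosed : IsClosed v := hcompl ▸ hu.isClosed_compl
    rw [hcompl, hvclosed.closure_eq] at hz2
    exact absurd (Set.mem_inter hz1 hz2) (by rw [hdisj]; exact notMem_empty z)
  · intro hP F hreg hne hnu
    by_contra hcon
    rw [Set.not_nonempty_iff_eq_empty] at hcon
    have hFclosed : IsClosed F := hreg ▸ isClosed_closure
    have hFopen : IsOpen F := by
      have hsub : F ⊆ interior F := by
        intro x hx
        have hx' : x ∉ closure Fᶜ := fun h =>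
          absurd (Set.mem_inter hx h) (by rw [hcon]; exact notMem_empty x)
        rw [closure_compl, Set.mem_compl_iff, not_not] at hx'
        exact hx'
      have : interior F = F := Set.eq_of_subset_of_subset interior_subset hsub
      rw [← this]
      exact isOpen_interior
    rcases isClopen_iff.mp ⟨hFclosed, hFopen⟩ with h | h
    · exact hne h
    · exact hnu h
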